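/- In the Lie algebra L(A)⊗ℂ with the bracket of Proposition 4.2, the subspace spanned by V_i (1≤i≤n) and U_{j,i} − U_{i,j} (1≤i<j≤n) is a Lie ideal. -/

import Mathlib

/-- Index set of the isomorphism classes of indecomposable Λ(n-1,1,1)-modules:
`Sum.inl (i,j)` is U_{i,j} (1≤i,j≤n), `Sum.inr (Sum.inl i)` is V_i, and
`Sum.inr (Sum.inr ⟨(i,j),_⟩)` is W_{i,j} (1≤i≤j≤n-1), all 0-indexed. -/
abbrev LIdx (n : ℕ) :=
  (Fin n × Fin n) ⊕ (Fin n ⊕ {p : Fin n × Fin n // p.1 ≤ p.2 ∧ p.2.val + 1 < n})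

/-- Structure constants of Riedtmann's Lie algebra of Λ(n-1,1,1)
(Proposition 4.2 of the paper). -/
noncomputable def cst {n : ℕ} (R : Type) [CommRing R] :
    LIdx n → LIdx n → (LIdx n →₀ R)
  | .inr (.inr p), .inr (.inr q) =>
      (if h : p.1.2.val + 1 = q.1.1.val then
        Finsupp.single (.inr (.inr ⟨(p.1.1, q.1.2), by
          obtain ⟨h1, _⟩ := p.2; obtain ⟨h2, h3⟩ := q.2
          refine ⟨?_, h3⟩
          change p.1.1 ≤ q.1.2
          rw [Fin.le_def] at h1 h2 ⊢
          omega⟩)) (1 : R)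
      else 0)
      - (if h : q.1.2.val + 1 = p.1.1.val then
        Finsupp.single (.inr (.inr ⟨(q.1.1, p.1.2), by
          obtain ⟨h1, h4⟩ := p.2; obtain ⟨h2, _⟩ := q.2
          refine ⟨?_, h4⟩
          change q.1.1 ≤ p.1.2
          rw [Fin.le_def] at h1 h2 ⊢
          omega⟩)) (1 : R)
      else 0)
  | .inr (.inr p), .inr (.inl l) =>
      if p.1.2.val + 1 = l.val then Finsupp.single (.inr (.inl p.1.1)) (1 : R) else 0
  | .inr (.inl l), .inr (.inr p) =>
      -(if p.1.2.val + 1 = l.val then Finsupp.single (.inr (.inl p.1.1)) (1 : R) else 0)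
  | .inr (.inr p), .inl (l, m) =>
      (if p.1.2.val + 1 = m.val then Finsupp.single (.inl (l, p.1.1)) (1 : R) else 0)
      + (if p.1.2.val + 1 = l.val then Finsupp.single (.inl (p.1.1, m)) (1 : R) else 0)
  | .inl (l, m), .inr (.inr p) =>
      -((if p.1.2.val + 1 = m.val then Finsupp.single (.inl (l, p.1.1)) (1 : R) else 0)
        + (if p.1.2.val + 1 = l.val then Finsupp.single (.inl (p.1.1, m)) (1 : R) else 0))
  | .inr (.inl i), .inr (.inl j) =>
      Finsupp.single (.inl (j, i)) (1 : R) - Finsupp.single (.inl (i, j)) (1 : R)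
  | _, _ => 0

/-- The bilinear bracket on the free module on the indecomposables determined by
the structure constants of Proposition 4.2. -/
noncomputable def brkt {n : ℕ} {R : Type} [CommRing R] (x y : LIdx n →₀ R) :
    LIdx n →₀ R :=
  Finsupp.sum x fun a r => Finsupp.sum y fun b s => (r * s) • cst R a b

/-- Basis element U_{i,j}. -/
noncomputable def Ub {n : ℕ} (R : Type) [CommRing R] (i j : Fin n) : LIdx n →₀ R :=
  Finsupp.single (.inl (i, j)) 1

/-- Basis element V_i. -/
noncomputable def Vb {n : ℕ} (R : Type) [CommRing R] (i : Fin n) : LIdx n →₀ R :=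
  Finsupp.single (.inr (.inl i)) 1

/-- Basis element W_{i,j} (i ≤ j ≤ n-1, 0-indexed j+1 < n). -/
noncomputable def Wb {n : ℕ} (R : Type) [CommRing R] (i j : Fin n)
    (h : i ≤ j ∧ j.val + 1 < n) : LIdx n →₀ R :=
  Finsupp.single (.inr (.inr ⟨(i, j), h⟩)) 1

/-- The span of the elements V_i (1≤i≤n) and U_{j,i} − U_{i,j} (1≤i<j≤n). -/
noncomputable def idealC (n : ℕ) : Submodule ℂ (LIdx n →₀ ℂ) :=
  Submodule.span ℂ
    ({m | ∃ i : Fin n, m = Vb ℂ i} ∪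
      {m | ∃ i j : Fin n, i < j ∧ m = Ub ℂ j i - Ub ℂ i j})


section Stmt16Aux

variable {n : ℕ}

lemma Vb_mem (i : Fin n) :
    (Finsupp.single (Sum.inr (Sum.inl i)) 1 : LIdx n →₀ ℂ) ∈ idealC n :=
  Submodule.subset_span (Or.inl ⟨i, rfl⟩)

lemma diff_mem (i j : Fin n) :
    (Finsupp.single (Sum.inl (j, i)) 1 - Finsupp.single (Sum.inl (i, j)) 1 :
      LIdx n →₀ ℂ) ∈ idealC n := by
  rcases lt_trichotomy i j with h | h | h
  · exact Submodule.subset_span (Or.inr ⟨i, j, h, rfl⟩)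
  · subst h; simp
  · have e : (Finsupp.single (Sum.inl (j, i)) 1 - Finsupp.single (Sum.inl (i, j)) 1 :
        LIdx n →₀ ℂ) = -(Finsupp.single (Sum.inl (i, j)) 1 - Finsupp.single (Sum.inl (j, i)) 1) := by
      abel
    rw [e]
    exact neg_mem (Submodule.subset_span (Or.inr ⟨j, i, h, rfl⟩))

lemma cst_V_right (a : LIdx n) (i : Fin n) :
    cst ℂ a (Sum.inr (Sum.inl i)) ∈ idealC n := by
  rcases a with p | l | w
  · simp only [cst]; exact zero_mem _
  · simp only [cst]; exact diff_mem l i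
  · simp only [cst]
    split_ifs
    · exact Vb_mem _
    · exact zero_mem _

lemma cst_V_left (i : Fin n) (a : LIdx n) :
    cst ℂ (Sum.inr (Sum.inl i)) a ∈ idealC n := by
  rcases a with p | l | w
  · simp only [cst]; exact zero_mem _
  · simp only [cst]; exact diff_mem i l
  · simp only [cst]
    split_ifs
    · exact neg_mem (Vb_mem _)
    · simp only [neg_zero]; exact zero_mem _

lemma cst_U_right (a : LIdx n) (i j : Fin n) :
    cst ℂ a (Sum.inl (j, i)) - cst ℂ a (Sum.inl (i, j)) ∈ idealC n := by
  rcases a with p | l | w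
  · simp only [cst, sub_zero]; exact zero_mem _
  · simp only [cst, sub_zero]; exact zero_mem _
  · simp only [cst]
    split_ifs with h1 h2 h2
    · have h := add_mem (diff_mem w.1.1 j) (diff_mem i w.1.1)
      convert h using 1
      abel
    · have h := diff_mem w.1.1 j
      convert h using 1
      abel
    · have h := diff_mem i w.1.1
      convert h using 1
      abel
    · simp only [add_zero, sub_zero]; exact zero_mem _

lemma cst_U_left (i j : Fin n) (a : LIdx n) :
    cst ℂ (Sum.inl (j, i)) a - cst ℂ (Sum.inl (i, j)) a ∈ idealC n := by
  rcases a with p | l | w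
  · simp only [cst, sub_zero]; exact zero_mem _
  · simp only [cst, sub_zero]; exact zero_mem _
  · simp only [cst]
    split_ifs with h1 h2 h2
    · have h := add_mem (diff_mem j w.1.1) (diff_mem w.1.1 i)
      convert h using 1
      abel
    · have h := diff_mem j w.1.1
      convert h using 1
      abel
    · have h := diff_mem w.1.1 i
      convert h using 1
      abel
    · simp only [add_zero, neg_zero, sub_zero]; exact zero_mem _

lemma brkt_zero_right (x : LIdx n →₀ ℂ) : brkt x 0 = 0 := by
  simp [brkt]

lemma brkt_zero_left (x : LIdx n →₀ ℂ) : brkt 0 x = 0 := by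
  simp [brkt]

lemma brkt_add_right (x y z : LIdx n →₀ ℂ) :
    brkt x (y + z) = brkt x y + brkt x z := by
  unfold brkt
  rw [← Finsupp.sum_add]
  refine Finsupp.sum_congr fun a _ => ?_
  rw [Finsupp.sum_add_index' (fun b => by simp) (fun b s t => by rw [mul_add, add_smul])]

lemma brkt_add_left (x y z : LIdx n →₀ ℂ) :
    brkt (y + z) x = brkt y x + brkt z x := by
  unfold brkt
  rw [Finsupp.sum_add_index' (fun a => by simp) (fun a r t => ?_)]
  rw [← Finsupp.sum_add]
  refine Finsupp.sum_congr fun b _ => ?_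
  rw [add_mul, add_smul]

lemma brkt_sub_right (x y z : LIdx n →₀ ℂ) :
    brkt x (y - z) = brkt x y - brkt x z := by
  unfold brkt
  rw [← Finsupp.sum_sub]
  refine Finsupp.sum_congr fun a _ => ?_
  rw [Finsupp.sum_sub_index (fun b s t => by rw [mul_sub, sub_smul])]

lemma brkt_sub_left (x y z : LIdx n →₀ ℂ) :
    brkt (y - z) x = brkt y x - brkt z x := by
  unfold brkt
  rw [Finsupp.sum_sub_index (fun a r t => ?_)]
  rw [← Finsupp.sum_sub]
  refine Finsupp.sum_congr fun b _ => ?_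
  rw [sub_mul, sub_smul]

lemma brkt_smul_right (c : ℂ) (x y : LIdx n →₀ ℂ) :
    brkt x (c • y) = c • brkt x y := by
  unfold brkt
  rw [Finsupp.smul_sum]
  refine Finsupp.sum_congr fun a _ => ?_
  rw [Finsupp.sum_smul_index (fun b => by simp), Finsupp.smul_sum]
  refine Finsupp.sum_congr fun b _ => ?_
  rw [smul_smul, mul_left_comm]

lemma brkt_smul_left (c : ℂ) (x y : LIdx n →₀ ℂ) :
    brkt (c • y) x = c • brkt y x := by
  unfold brkt
  rw [Finsupp.sum_smul_index (fun a => by simp), Finsupp.smul_sum]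
  refine Finsupp.sum_congr fun a _ => ?_
  rw [Finsupp.smul_sum]
  refine Finsupp.sum_congr fun b _ => ?_
  rw [smul_smul, mul_assoc]

lemma brkt_single_right (x : LIdx n →₀ ℂ) (b : LIdx n) :
    brkt x (Finsupp.single b 1) = x.sum fun a r => r • cst ℂ a b := by
  unfold brkt
  refine Finsupp.sum_congr fun a _ => ?_
  rw [Finsupp.sum_single_index (by simp), mul_one]

lemma brkt_single_left (x : LIdx n →₀ ℂ) (b : LIdx n) :
    brkt (Finsupp.single b 1) x = x.sum fun c s => s • cst ℂ b c := by
  unfold brkt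
  rw [Finsupp.sum_single_index (by simp)]
  refine Finsupp.sum_congr fun c _ => ?_
  rw [one_mul]

lemma brkt_V_right (x : LIdx n →₀ ℂ) (i : Fin n) :
    brkt x (Vb ℂ i) ∈ idealC n := by
  rw [show Vb ℂ i = (Finsupp.single (Sum.inr (Sum.inl i)) 1 : LIdx n →₀ ℂ) from rfl, brkt_single_right]
  refine Submodule.finsuppSum_mem ℂ _ x _ fun a _ => ?_
  exact Submodule.smul_mem _ _ (cst_V_right a i)

lemma brkt_V_left (x : LIdx n →₀ ℂ) (i : Fin n) :
    brkt (Vb ℂ i) x ∈ idealC n := by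
  rw [show Vb ℂ i = (Finsupp.single (Sum.inr (Sum.inl i)) 1 : LIdx n →₀ ℂ) from rfl, brkt_single_left]
  refine Submodule.finsuppSum_mem ℂ _ x _ fun a _ => ?_
  exact Submodule.smul_mem _ _ (cst_V_left i a)

lemma brkt_U_right (x : LIdx n →₀ ℂ) (i j : Fin n) :
    brkt x (Ub ℂ j i - Ub ℂ i j) ∈ idealC n := by
  rw [brkt_sub_right,
    show Ub ℂ j i = (Finsupp.single (Sum.inl (j, i)) 1 : LIdx n →₀ ℂ) from rfl,
    show Ub ℂ i j = (Finsupp.single (Sum.inl (i, j)) 1 : LIdx n →₀ ℂ) from rfl,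
    brkt_single_right, brkt_single_right, ← Finsupp.sum_sub]
  refine Submodule.finsuppSum_mem ℂ _ x _ fun a _ => ?_
  rw [← smul_sub]
  exact Submodule.smul_mem _ _ (cst_U_right a i j)

lemma brkt_U_left (x : LIdx n →₀ ℂ) (i j : Fin n) :
    brkt (Ub ℂ j i - Ub ℂ i j) x ∈ idealC n := by
  rw [brkt_sub_left,
    show Ub ℂ j i = (Finsupp.single (Sum.inl (j, i)) 1 : LIdx n →₀ ℂ) from rfl,
    show Ub ℂ i j = (Finsupp.single (Sum.inl (i, j)) 1 : LIdx n →₀ ℂ) from rfl,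
    brkt_single_left, brkt_single_left, ← Finsupp.sum_sub]
  refine Submodule.finsuppSum_mem ℂ _ x _ fun a _ => ?_
  rw [← smul_sub]
  exact Submodule.smul_mem _ _ (cst_U_left i j a)

end Stmt16Aux

/-- in L(A)⊗ℂ, the subspace spanned by V_i (1≤i≤n) and
U_{j,i} − U_{i,j} (1≤i<j≤n) is a Lie ideal. -/
theorem stmt_16 (n : ℕ) :
    ∀ x : LIdx n →₀ ℂ, ∀ y ∈ idealC n,
      brkt x y ∈ idealC n ∧ brkt y x ∈ idealC n := by
  intro x y hy
  induction hy using Submodule.span_induction with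
  | mem m hm =>
    rcases hm with ⟨i, rfl⟩ | ⟨i, j, hij, rfl⟩
    · exact ⟨brkt_V_right x i, brkt_V_left x i⟩
    · exact ⟨brkt_U_right x i j, brkt_U_left x i j⟩
  | zero =>
    rw [brkt_zero_right, brkt_zero_left]
    exact ⟨zero_mem _, zero_mem _⟩
  | add y z _ _ hy hz =>
    rw [brkt_add_right, brkt_add_left]
    exact ⟨add_mem hy.1 hz.1, add_mem hy.2 hz.2⟩
  | smul c y _ hy =>
    rw [brkt_smul_right, brkt_smul_left]
    exact ⟨Submodule.smul_mem _ _ hy.1, Submodule.smul_mem _ _ hy.2⟩
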